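/- Let n ≥ 1 and φ ∈ (−π/2, π/2). Then the following two contour-shift identities hold, with all integrals absolutely convergent: (i) ∫_ℝ (sinh λ/λ)^{1/2} cosh λ · (cosh(λ−iφ))^{−(n+3/2)} dλ = A_n(iφ); (ii) ∫_ℝ λ·(sinh λ/λ)^{3/2} · (cosh(λ−iφ))^{−(n+3/2)} dλ = B_n(iφ). Here (sinh λ/λ)^{1/2} and (sinh λ/λ)^{3/2} are real powers of the positive quantity sinh λ/λ (extended by 1 at λ = 0), and (cosh(λ−iφ))^{−(n+3/2)} is the principal-branch complex power (the base has real part cosh λ · cos φ > 0). -/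

import Mathlib

open MeasureTheory Topology Filter Set

noncomputable section

/-- `sinh(ζ)/ζ`, extended by `1` at `ζ = 0`. -/
def sinhc (z : ℂ) : ℂ := if z = 0 then 1 else Complex.sinh z / z

/-- `A_n(w) = ∫_ℝ (sinh(λ+w)/(λ+w))^{1/2} cosh(λ+w) (cosh λ)^{−n−3/2} dλ`
(principal branch powers). -/
def An (n : ℕ) (w : ℂ) : ℂ :=
  ∫ l : ℝ, sinhc (l + w) ^ ((1 : ℂ) / 2) * Complex.cosh (l + w) *
    Complex.cosh (l : ℂ) ^ (-(n : ℂ) - 3 / 2)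

/-- `B_n(w) = ∫_ℝ (λ+w)(sinh(λ+w)/(λ+w))^{3/2} (cosh λ)^{−n−3/2} dλ`
(principal branch powers). -/
def Bn (n : ℕ) (w : ℂ) : ℂ :=
  ∫ l : ℝ, ((l : ℂ) + w) * sinhc (l + w) ^ ((3 : ℂ) / 2) *
    Complex.cosh (l : ℂ) ^ (-(n : ℂ) - 3 / 2)

/-- `sinh λ / λ` for real `λ`, extended by `1` at `λ = 0`. -/
def shc (l : ℝ) : ℝ := if l = 0 then 1 else Real.sinh l / l

/-! ### Auxiliary lemmas -/

lemma sinhc_eq_dslope : sinhc = dslope Complex.sinh 0 := by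
  funext z
  rcases eq_or_ne z 0 with rfl | hz
  · simp [sinhc, dslope_same, Complex.deriv_sinh]
  · rw [sinhc, if_neg hz, dslope_of_ne _ hz, slope_def_field]
    simp

lemma differentiable_sinhc : Differentiable ℂ sinhc := by
  rw [sinhc_eq_dslope]
  intro z
  rcases eq_or_ne z 0 with rfl | hz
  · obtain ⟨p, hp⟩ := Complex.differentiable_sinh.analyticAt (0:ℂ)
    exact hp.has_fpower_series_dslope_fslope.analyticAt.differentiableAt
  · exact (differentiableAt_dslope_of_ne hz).mpr (Complex.differentiable_sinh _)

lemma sinh_re' (z : ℂ) : (Complex.sinh z).re = Real.sinh z.re * Real.cos z.im := by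
  rw [Complex.sinh, Complex.div_re]
  simp [Complex.exp_re, Complex.exp_im, Real.sinh_eq, Complex.normSq]; ring

lemma sinh_im' (z : ℂ) : (Complex.sinh z).im = Real.cosh z.re * Real.sin z.im := by
  rw [Complex.sinh, Complex.div_im]
  simp [Complex.exp_re, Complex.exp_im, Real.cosh_eq, Complex.normSq]; ring

lemma cosh_re' (z : ℂ) : (Complex.cosh z).re = Real.cosh z.re * Real.cos z.im := by
  rw [Complex.cosh, Complex.div_re]
  simp [Complex.exp_re, Complex.exp_im, Real.cosh_eq, Complex.normSq]; ring

lemma mul_nonneg_of_nonpos_nonpos' {a b : ℝ} (ha : a ≤ 0) (hb : b ≤ 0) : 0 ≤ a * b := by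
  nlinarith

lemma sinhc_re_pos {z : ℂ} (hz : |z.im| < Real.pi / 2) : 0 < (sinhc z).re := by
  rcases eq_or_ne z 0 with rfl | h0
  · simp [sinhc]
  · rw [sinhc, if_neg h0, Complex.div_re, sinh_re', sinh_im']
    have hns : 0 < Complex.normSq z := Complex.normSq_pos.mpr h0
    have hcos : 0 < Real.cos z.im :=
      Real.cos_pos_of_mem_Ioo ⟨by linarith [abs_lt.mp hz], (abs_lt.mp hz).2⟩
    have h1 : 0 ≤ z.re * Real.sinh z.re := by
      rcases le_or_gt 0 z.re with h | h
      · exact mul_nonneg h (Real.sinh_nonneg_iff.mpr h)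
      · exact mul_nonneg_of_nonpos_nonpos' h.le (Real.sinh_nonpos_iff.mpr h.le)
    have h2 : 0 ≤ z.im * Real.sin z.im := by
      rcases le_or_gt 0 z.im with h | h
      · exact mul_nonneg h (Real.sin_nonneg_of_mem_Icc
          ⟨h, by nlinarith [Real.pi_gt_three, abs_lt.mp hz]⟩)
      · have : Real.sin z.im ≤ 0 := by
          have := Real.sin_nonneg_of_mem_Icc (x := -z.im)
            ⟨by linarith, by nlinarith [Real.pi_gt_three, abs_lt.mp hz]⟩
          simpa using this
        exact mul_nonneg_of_nonpos_nonpos' h.le this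
    have hcosh : (1:ℝ) ≤ Real.cosh z.re := Real.one_le_cosh z.re
    have hne : z.re ≠ 0 ∨ z.im ≠ 0 := by
      by_contra h; push_neg at h
      exact h0 (Complex.ext h.1 h.2)
    have hnum : 0 < Real.sinh z.re * Real.cos z.im * z.re +
        Real.cosh z.re * Real.sin z.im * z.im := by
      rcases hne with h | h
      · have : 0 < z.re * Real.sinh z.re := by
          rcases h1.lt_or_eq with h' | h'
          · exact h'
          · exfalso
            rcases mul_eq_zero.mp h'.symm with h'' | h''
            · exact h h''
            · exact h (by simpa using Real.sinh_eq_zero.mp h'')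
        nlinarith
      · have : 0 < z.im * Real.sin z.im := by
          rcases h2.lt_or_eq with h' | h'
          · exact h'
          · exfalso
            rcases mul_eq_zero.mp h'.symm with h'' | h''
            · exact h h''
            · have hmem := abs_lt.mp hz
              exact h (Real.sin_eq_zero_iff_of_lt_of_lt (by linarith [Real.pi_pos])
                (by linarith [Real.pi_pos]) |>.mp h'')
        nlinarith
    rw [← add_div]
    exact div_pos hnum hns

lemma norm_cosh_le (z : ℂ) : ‖Complex.cosh z‖ ≤ Real.cosh z.re := by
  rw [Complex.cosh, Real.cosh_eq]
  calc ‖(Complex.exp z + Complex.exp (-z)) / 2‖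
      ≤ (‖Complex.exp z‖ + ‖Complex.exp (-z)‖) / 2 := by
        rw [norm_div]
        simp only [Complex.norm_ofNat]
        gcongr
        exact norm_add_le _ _
    _ = (Real.exp z.re + Real.exp (-z.re)) / 2 := by
        rw [Complex.norm_exp, Complex.norm_exp, Complex.neg_re]

lemma sinh_le_mul_cosh {t : ℝ} (ht : 0 ≤ t) : Real.sinh t ≤ t * Real.cosh t := by
  have hmono : MonotoneOn (fun s => s * Real.cosh s - Real.sinh s) (Set.Ici 0) := by
    have hd : ∀ x : ℝ, HasDerivAt (fun s => s * Real.cosh s - Real.sinh s) (x * Real.sinh x) x := by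
      intro x
      have := ((hasDerivAt_id x).mul (Real.hasDerivAt_cosh x)).sub (Real.hasDerivAt_sinh x)
      exact this.congr_deriv (by simp)
    apply monotoneOn_of_deriv_nonneg (convex_Ici 0)
    · exact (Continuous.sub (continuous_id.mul Real.continuous_cosh)
        Real.continuous_sinh).continuousOn
    · exact fun x _ => ((hd x).differentiableAt).differentiableWithinAt
    · intro x hx
      rw [interior_Ici] at hx
      rw [(hd x).deriv]
      exact mul_nonneg hx.le (Real.sinh_nonneg_iff.mpr hx.le)
  have := hmono Set.self_mem_Ici (Set.mem_Ici.mpr ht) ht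
  simpa using this

lemma norm_sinh_le_mul (z : ℂ) : ‖Complex.sinh z‖ ≤ ‖z‖ * Real.cosh z.re := by
  have h1 : |Real.sinh z.re| ≤ |z.re| * Real.cosh z.re := by
    rw [Real.abs_sinh]
    calc Real.sinh |z.re| ≤ |z.re| * Real.cosh |z.re| := sinh_le_mul_cosh (abs_nonneg _)
      _ = |z.re| * Real.cosh z.re := by rw [Real.cosh_abs]
  have h2 : |Real.sin z.im| ≤ |z.im| := Real.abs_sin_le_abs
  have hcosh : (1:ℝ) ≤ Real.cosh z.re := Real.one_le_cosh z.re
  have habs : ‖Complex.sinh z‖ ^ 2 ≤ (‖z‖ * Real.cosh z.re) ^ 2 := by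
    rw [Complex.sq_norm, Complex.normSq_apply, sinh_re', sinh_im']
    have hz2 : ‖z‖ ^ 2 = z.re ^ 2 + z.im ^ 2 := by
      rw [Complex.sq_norm, Complex.normSq_apply]; ring
    have hc : Real.cos z.im ^ 2 + Real.sin z.im ^ 2 = 1 := by
      rw [add_comm]; exact Real.sin_sq_add_cos_sq z.im
    have e1 := mul_self_le_mul_self (abs_nonneg (Real.sinh z.re)) h1
    have e2 := mul_self_le_mul_self (abs_nonneg (Real.sin z.im)) h2
    nlinarith [e1, e2, abs_mul_abs_self (Real.sinh z.re), abs_mul_abs_self (Real.sin z.im),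
      abs_mul_abs_self z.re, abs_mul_abs_self z.im, hc, Real.cosh_sq z.re, hz2, hcosh,
      sq_nonneg (Real.sin z.im), sq_nonneg z.im, sq_nonneg (Real.cosh z.re)]
  exact (pow_le_pow_iff_left₀ (norm_nonneg _)
    (mul_nonneg (norm_nonneg _) (by positivity)) two_ne_zero).mp habs

lemma norm_sinhc_le (z : ℂ) : ‖sinhc z‖ ≤ Real.cosh z.re := by
  rcases eq_or_ne z 0 with rfl | h0
  · simpa [sinhc] using Real.one_le_cosh 0
  · rw [sinhc, if_neg h0, norm_div]
    rw [div_le_iff₀ (by simpa using h0)]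
    calc ‖Complex.sinh z‖ ≤ ‖z‖ * Real.cosh z.re := norm_sinh_le_mul z
      _ = Real.cosh z.re * ‖z‖ := mul_comm _ _

lemma cosh_re_pos {z : ℂ} (h : |z.im| < Real.pi / 2) : 0 < (Complex.cosh z).re := by
  rw [cosh_re']
  have := abs_lt.mp h
  exact mul_pos (Real.cosh_pos _) (Real.cos_pos_of_mem_Ioo ⟨by linarith, this.2⟩)

lemma cosh_mem_slitPlane {z : ℂ} (h : |z.im| < Real.pi / 2) :
    Complex.cosh z ∈ Complex.slitPlane :=
  Complex.mem_slitPlane_iff.mpr (Or.inl (cosh_re_pos h))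

lemma abs_cosh_cpow_le {w : ℂ} {r : ℝ} (hr : r ≤ 0) {c : ℝ} (hc : 0 < c)
    (hcos : c ≤ Real.cos w.im) :
    ‖Complex.cosh w ^ ((r : ℝ) : ℂ)‖ ≤ (c * Real.cosh w.re) ^ r := by
  rw [Complex.norm_cpow_real]
  have h1 : c * Real.cosh w.re ≤ ‖Complex.cosh w‖ := by
    calc c * Real.cosh w.re ≤ Real.cos w.im * Real.cosh w.re :=
          mul_le_mul_of_nonneg_right hcos (Real.cosh_pos _).le
      _ = (Complex.cosh w).re := by rw [cosh_re']; ring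
      _ ≤ ‖Complex.cosh w‖ := Complex.re_le_norm _
  exact Real.rpow_le_rpow_of_nonpos (by positivity) h1 hr

lemma exp_abs_div_two_le_cosh (x : ℝ) : Real.exp |x| / 2 ≤ Real.cosh x := by
  rw [Real.cosh_eq]
  rcases abs_cases x with ⟨h, _⟩ | ⟨h, _⟩ <;> rw [h] <;>
    nlinarith [Real.exp_pos (-x), Real.exp_pos x]

lemma cosh_inv_le (x : ℝ) : (Real.cosh x)⁻¹ ≤ 2 * Real.exp (-|x|) := by
  have h := exp_abs_div_two_le_cosh x
  rw [Real.exp_neg]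
  calc (Real.cosh x)⁻¹ ≤ (Real.exp |x| / 2)⁻¹ := inv_anti₀ (by positivity) h
    _ = 2 * (Real.exp |x|)⁻¹ := by field_simp

lemma exp_neg_abs_half_le (x : ℝ) : Real.exp (-(|x|/2)) ≤ 16/(1+x^2) := by
  have h := Real.add_one_le_exp (|x|/4)
  have h2 : (1 + x^2)/16 ≤ Real.exp (|x|/4) ^ 2 := by
    nlinarith [sq_abs x, abs_nonneg x, Real.exp_pos (|x|/4)]
  have h3 : Real.exp (|x|/4) ^ 2 = Real.exp (|x|/2) := by
    rw [sq, ← Real.exp_add]; ring_nf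
  rw [h3] at h2
  rw [Real.exp_neg, inv_eq_one_div, div_le_div_iff₀ (Real.exp_pos _) (by positivity)]
  nlinarith [h2]

lemma integrable_exp_neg_abs_half : Integrable (fun x : ℝ => Real.exp (-(|x|/2))) := by
  apply Integrable.mono' (integrable_inv_one_add_sq.const_mul 16)
  · exact (Real.continuous_exp.comp ((continuous_abs.div_const 2).neg)).aestronglyMeasurable
  · refine Filter.Eventually.of_forall fun x => ?_
    rw [Real.norm_eq_abs, abs_of_pos (Real.exp_pos _)]
    calc Real.exp (-(|x|/2)) ≤ 16/(1+x^2) := exp_neg_abs_half_le x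
      _ = 16 * (1+x^2)⁻¹ := by ring

lemma contour_shift (f : ℂ → ℂ) (φ C : ℝ)
    (Hd : ∀ z : ℂ, z.im ∈ Set.uIcc 0 φ → DifferentiableAt ℂ f z)
    (Hb : ∀ z : ℂ, z.im ∈ Set.uIcc 0 φ → ‖f z‖ ≤ C * Real.exp (-(|z.re|/2))) :
    Integrable (fun x : ℝ => f x) volume ∧
      Integrable (fun x : ℝ => f (x + φ * Complex.I)) volume ∧
      ∫ x : ℝ, f x = ∫ x : ℝ, f (x + φ * Complex.I) := by
  have key : ∀ y : ℝ, y ∈ Set.uIcc 0 φ →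
      Integrable (fun x : ℝ => f (x + y * Complex.I)) volume := by
    intro y hy
    have him : ∀ x : ℝ, ((x : ℂ) + y * Complex.I).im = y := by intro x; simp
    have hre : ∀ x : ℝ, ((x : ℂ) + y * Complex.I).re = x := by intro x; simp
    have hc : Continuous fun x : ℝ => f ((x : ℂ) + y * Complex.I) := by
      rw [continuous_iff_continuousAt]
      intro x
      exact ((Hd _ (by rw [him]; exact hy)).continuousAt).comp
        ((by fun_prop : Continuous fun x : ℝ => (x : ℂ) + y * Complex.I).continuousAt)
    refine Integrable.mono' (integrable_exp_neg_abs_half.const_mul C) hc.aestronglyMeasurable ?_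
    refine Filter.Eventually.of_forall fun x => ?_
    have := Hb _ (by rw [him x]; exact hy)
    rwa [hre x] at this
  have Int0 : Integrable (fun x : ℝ => f x) volume := by
    have := key 0 Set.left_mem_uIcc
    simpa using this
  have Intφ := key φ Set.right_mem_uIcc
  refine ⟨Int0, Intφ, ?_⟩
  have rect : ∀ T : ℝ, (∫ x in -T..T, f x) - (∫ x in -T..T, f (x + φ * Complex.I)) =
      Complex.I • (∫ y in (0:ℝ)..φ, f ((-T : ℝ) + y * Complex.I)) -
      Complex.I • (∫ y in (0:ℝ)..φ, f ((T : ℝ) + y * Complex.I)) := by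
    intro T
    have H := Complex.integral_boundary_rect_eq_zero_of_differentiableOn f
      ((-T : ℝ) : ℂ) ((T : ℝ) + (φ : ℝ) * Complex.I) ?_
    · simp only [Complex.add_re, Complex.add_im, Complex.ofReal_re, Complex.ofReal_im,
        Complex.mul_re, Complex.mul_im, Complex.I_re, Complex.I_im, Complex.ofReal_neg,
        Complex.neg_re, Complex.neg_im, mul_zero, mul_one, zero_mul, sub_zero, zero_sub,
        add_zero, zero_add, neg_zero, Complex.ofReal_zero] at H
      have H2 : (∫ x in -T..T, f x) - (∫ x in -T..T, f (x + φ * Complex.I)) +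
          Complex.I • (∫ y in (0:ℝ)..φ, f ((T : ℝ) + y * Complex.I)) -
          Complex.I • (∫ y in (0:ℝ)..φ, f ((-T : ℝ) + y * Complex.I)) = 0 := by
        simpa only [Complex.ofReal_neg] using H
      linear_combination H2
    · intro z hz
      refine (Hd z ?_).differentiableWithinAt
      rw [Complex.mem_reProdIm] at hz
      have := hz.2
      simpa using this
  have hφabs : ∀ (s : ℝ), ‖∫ y in (0:ℝ)..φ, f ((s : ℝ) + y * Complex.I)‖ ≤
      C * Real.exp (-(|s|/2)) * |φ| := by
    intro s
    have := intervalIntegral.norm_integral_le_of_norm_le_const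
      (C := C * Real.exp (-(|s|/2))) (f := fun y : ℝ => f ((s : ℝ) + y * Complex.I))
      (a := 0) (b := φ) ?_
    · simpa using this
    · intro y hy
      have hy' : y ∈ Set.uIcc 0 φ := Set.uIoc_subset_uIcc hy
      have := Hb ((s : ℝ) + y * Complex.I) (by simpa using hy')
      simpa using this
  have hdecay : Tendsto (fun T : ℝ => C * Real.exp (-(T/2)) * |φ|) atTop (nhds 0) := by
    have h1 : Tendsto (fun T : ℝ => -(T/2)) atTop atBot := by
      apply tendsto_neg_atTop_atBot.comp
      exact Tendsto.atTop_div_const (by norm_num) tendsto_id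
    have h3 := ((Real.tendsto_exp_atBot.comp h1).const_mul C).mul_const |φ|
    simpa using h3
  have tVp : Tendsto (fun T : ℝ => Complex.I • ∫ y in (0:ℝ)..φ, f ((T : ℝ) + y * Complex.I))
      atTop (nhds 0) := by
    refine squeeze_zero_norm' ?_ hdecay
    filter_upwards [eventually_ge_atTop (0:ℝ)] with T hT
    rw [norm_smul, Complex.norm_I, one_mul]
    have := hφabs T
    rwa [abs_of_nonneg hT] at this
  have tVm : Tendsto (fun T : ℝ => Complex.I • ∫ y in (0:ℝ)..φ, f ((-T : ℝ) + y * Complex.I))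
      atTop (nhds 0) := by
    refine squeeze_zero_norm' ?_ hdecay
    filter_upwards [eventually_ge_atTop (0:ℝ)] with T hT
    rw [norm_smul, Complex.norm_I, one_mul]
    have := hφabs (-T)
    rwa [abs_neg, abs_of_nonneg hT] at this
  have h1 : Tendsto (fun T : ℝ => ∫ x in -T..T, f x) atTop (nhds (∫ x : ℝ, f x)) :=
    intervalIntegral_tendsto_integral Int0 tendsto_neg_atTop_atBot tendsto_id
  have h2 : Tendsto (fun T : ℝ => ∫ x in -T..T, f (x + φ * Complex.I)) atTop
      (nhds (∫ x : ℝ, f (x + φ * Complex.I))) :=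
    intervalIntegral_tendsto_integral Intφ tendsto_neg_atTop_atBot tendsto_id
  have h3 := h1.sub h2
  have h4 : Tendsto (fun T : ℝ => (∫ x in -T..T, f x) - ∫ x in -T..T, f (x + φ * Complex.I))
      atTop (nhds 0) := by
    have := tVm.sub tVp
    rw [sub_zero] at this
    exact this.congr fun T => (rect T).symm
  exact sub_eq_zero.mp (tendsto_nhds_unique h3 h4)

lemma abs_im_le_of_uIcc {y φ : ℝ} (hy : y ∈ Set.uIcc 0 φ) : |y| ≤ |φ| := by
  rcases le_total 0 φ with h | h
  · rw [Set.uIcc_of_le h] at hy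
    rw [abs_of_nonneg hy.1, abs_of_nonneg h]; exact hy.2
  · rw [Set.uIcc_of_ge h] at hy
    rw [abs_of_nonpos hy.2, abs_of_nonpos h]; linarith [hy.1]

lemma abs_im_sub_le_of_uIcc {y φ : ℝ} (hy : y ∈ Set.uIcc 0 φ) : |y - φ| ≤ |φ| := by
  rcases le_total 0 φ with h | h
  · rw [Set.uIcc_of_le h] at hy
    rw [abs_of_nonpos (by linarith [hy.2]), abs_of_nonneg h]; linarith [hy.1]
  · rw [Set.uIcc_of_ge h] at hy
    rw [abs_of_nonneg (by linarith [hy.1]), abs_of_nonpos h]; linarith [hy.2]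

lemma shc_pos (l : ℝ) : 0 < shc l := by
  rw [shc]
  split_ifs with h
  · norm_num
  · rcases lt_or_gt_of_ne h with h' | h'
    · exact div_pos_of_neg_of_neg (Real.sinh_neg_iff.mpr h') h'
    · exact div_pos (Real.sinh_pos_iff.mpr h') h'

lemma ofReal_shc (l : ℝ) : ((shc l : ℝ) : ℂ) = sinhc (l : ℂ) := by
  rw [shc, sinhc]
  by_cases h : l = 0
  · simp [h]
  · rw [if_neg h, if_neg (by simpa using h)]
    push_cast [Complex.ofReal_sinh]
    rfl
theorem stmt10 (n : ℕ) (hn : 1 ≤ n) (φ : ℝ)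
    (hφ : φ ∈ Set.Ioo (-(Real.pi / 2)) (Real.pi / 2)) :
    Integrable (fun l : ℝ => ((shc l ^ ((1 : ℝ) / 2) * Real.cosh l : ℝ) : ℂ) *
        Complex.cosh ((l : ℂ) - Complex.I * φ) ^ (-(n : ℂ) - 3 / 2)) volume ∧
    Integrable (fun l : ℝ => ((l * shc l ^ ((3 : ℝ) / 2) : ℝ) : ℂ) *
        Complex.cosh ((l : ℂ) - Complex.I * φ) ^ (-(n : ℂ) - 3 / 2)) volume ∧
    Integrable (fun l : ℝ => sinhc ((l : ℂ) + Complex.I * φ) ^ ((1 : ℂ) / 2) *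
        Complex.cosh ((l : ℂ) + Complex.I * φ) *
        Complex.cosh (l : ℂ) ^ (-(n : ℂ) - 3 / 2)) volume ∧
    Integrable (fun l : ℝ => ((l : ℂ) + Complex.I * φ) *
        sinhc ((l : ℂ) + Complex.I * φ) ^ ((3 : ℂ) / 2) *
        Complex.cosh (l : ℂ) ^ (-(n : ℂ) - 3 / 2)) volume ∧
    (∫ l : ℝ, ((shc l ^ ((1 : ℝ) / 2) * Real.cosh l : ℝ) : ℂ) *
        Complex.cosh ((l : ℂ) - Complex.I * φ) ^ (-(n : ℂ) - 3 / 2)) =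
      An n (Complex.I * φ) ∧
    (∫ l : ℝ, ((l * shc l ^ ((3 : ℝ) / 2) : ℝ) : ℂ) *
        Complex.cosh ((l : ℂ) - Complex.I * φ) ^ (-(n : ℂ) - 3 / 2)) =
      Bn n (Complex.I * φ) := by
  obtain ⟨hφ1, hφ2⟩ := hφ
  have hφabs : |φ| < Real.pi / 2 := abs_lt.mpr ⟨by linarith, hφ2⟩
  have hcosφ : 0 < Real.cos φ := Real.cos_pos_of_mem_Ioo ⟨by simpa using hφ1, hφ2⟩
  set r : ℝ := -(n:ℝ) - 3/2 with hr
  have hr0 : r ≤ 0 := by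
    rw [hr]
    have : (0:ℝ) ≤ (n:ℝ) := Nat.cast_nonneg n
    linarith
  have hscast : (-(n:ℂ) - 3/2) = ((r : ℝ) : ℂ) := by rw [hr]; push_cast; ring
  set F : ℂ → ℂ := fun w => sinhc w ^ ((1:ℂ)/2) * Complex.cosh w *
    Complex.cosh (w - Complex.I * φ) ^ (-(n:ℂ) - 3/2) with hF
  set G : ℂ → ℂ := fun w => w * sinhc w ^ ((3:ℂ)/2) *
    Complex.cosh (w - Complex.I * φ) ^ (-(n:ℂ) - 3/2) with hG
  have strip1 : ∀ z : ℂ, z.im ∈ Set.uIcc 0 φ → |z.im| < Real.pi/2 :=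
    fun z hz => lt_of_le_of_lt (abs_im_le_of_uIcc hz) hφabs
  have hsubim : ∀ z : ℂ, (z - Complex.I * (φ:ℂ)).im = z.im - φ := by intro z; simp
  have hsubre : ∀ z : ℂ, (z - Complex.I * (φ:ℂ)).re = z.re := by intro z; simp
  have strip2 : ∀ z : ℂ, z.im ∈ Set.uIcc 0 φ → |(z - Complex.I * φ).im| < Real.pi/2 := by
    intro z hz
    rw [hsubim]
    exact lt_of_le_of_lt (abs_im_sub_le_of_uIcc hz) hφabs
  have hsp : ∀ z : ℂ, z.im ∈ Set.uIcc 0 φ → sinhc z ∈ Complex.slitPlane := fun z hz =>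
    Complex.mem_slitPlane_iff.mpr (Or.inl (sinhc_re_pos (strip1 z hz)))
  have hdcoshφ : ∀ z : ℂ, DifferentiableAt ℂ (fun w => Complex.cosh (w - Complex.I * (φ:ℂ))) z :=
    fun z => (Complex.differentiable_cosh _).comp z (differentiableAt_id.sub_const _)
  have HdF : ∀ z : ℂ, z.im ∈ Set.uIcc 0 φ → DifferentiableAt ℂ F z := by
    intro z hz
    exact (((differentiable_sinhc z).cpow (differentiableAt_const _) (hsp z hz)).mul
      (Complex.differentiable_cosh z)).mul
      ((hdcoshφ z).cpow (differentiableAt_const _) (cosh_mem_slitPlane (strip2 z hz)))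
  have HdG : ∀ z : ℂ, z.im ∈ Set.uIcc 0 φ → DifferentiableAt ℂ G z := by
    intro z hz
    exact (differentiableAt_id.mul
      ((differentiable_sinhc z).cpow (differentiableAt_const _) (hsp z hz))).mul
      ((hdcoshφ z).cpow (differentiableAt_const _) (cosh_mem_slitPlane (strip2 z hz)))
  -- cosine comparison on the shifted strip
  have hcos_sub : ∀ z : ℂ, z.im ∈ Set.uIcc 0 φ →
      Real.cos φ ≤ Real.cos ((z - Complex.I * (φ:ℂ)).im) := by
    intro z hz
    rw [hsubim, ← Real.cos_abs φ, ← Real.cos_abs (z.im - φ)]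
    apply Real.cos_le_cos_of_nonneg_of_le_pi (abs_nonneg _)
    · linarith [Real.pi_pos]
    · exact abs_im_sub_le_of_uIcc hz
  have habs_cpow : ∀ z : ℂ, z.im ∈ Set.uIcc 0 φ →
      ‖Complex.cosh (z - Complex.I * φ) ^ (-(n:ℂ) - 3/2)‖ ≤
        (Real.cos φ * Real.cosh z.re) ^ r := by
    intro z hz
    rw [hscast]
    have := abs_cosh_cpow_le (w := z - Complex.I * φ) hr0 hcosφ (hcos_sub z hz)
    rwa [hsubre] at this
  have h1n : (1:ℝ) ≤ (n:ℝ) := by exact_mod_cast hn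
  have key_pow : ∀ x : ℝ, Real.cosh x ^ (-(n:ℝ)) ≤ 2 * Real.exp (-(|x|/2)) := by
    intro x
    have h1 : Real.cosh x ^ (-(n:ℝ)) ≤ Real.cosh x ^ (-(1:ℝ)) :=
      Real.rpow_le_rpow_of_exponent_le (Real.one_le_cosh x) (by linarith)
    rw [Real.rpow_neg_one] at h1
    calc Real.cosh x ^ (-(n:ℝ)) ≤ (Real.cosh x)⁻¹ := h1
      _ ≤ 2 * Real.exp (-|x|) := cosh_inv_le x
      _ ≤ 2 * Real.exp (-(|x|/2)) := by
          have : Real.exp (-|x|) ≤ Real.exp (-(|x|/2)) :=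
            Real.exp_le_exp.mpr (by linarith [abs_nonneg x])
          linarith
  have HbF : ∀ z : ℂ, z.im ∈ Set.uIcc 0 φ →
      ‖F z‖ ≤ (2 * Real.cos φ ^ r) * Real.exp (-(|z.re|/2)) := by
    intro z hz
    have hu : 0 < Real.cosh z.re := Real.cosh_pos _
    have e1 : ‖sinhc z ^ ((1:ℂ)/2)‖ ≤ Real.cosh z.re ^ ((1:ℝ)/2) := by
      rw [show ((1:ℂ)/2) = (((1:ℝ)/2 : ℝ) : ℂ) by norm_num, Complex.norm_cpow_real]
      exact Real.rpow_le_rpow (norm_nonneg _) (norm_sinhc_le z) (by norm_num)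
    have comb : ‖F z‖ ≤ Real.cosh z.re ^ ((1:ℝ)/2) * Real.cosh z.re *
        ((Real.cos φ * Real.cosh z.re) ^ r) := by
      rw [hF]
      simp only [norm_mul]
      refine mul_le_mul (mul_le_mul e1 (norm_cosh_le z) (norm_nonneg _) (by positivity))
        (habs_cpow z hz) (norm_nonneg _) (by positivity)
    have alg : Real.cosh z.re ^ ((1:ℝ)/2) * Real.cosh z.re * ((Real.cos φ * Real.cosh z.re) ^ r)
        = Real.cos φ ^ r * Real.cosh z.re ^ (-(n:ℝ)) := by
      rw [Real.mul_rpow hcosφ.le hu.le]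
      rw [show Real.cosh z.re ^ ((1:ℝ)/2) * Real.cosh z.re *
          (Real.cos φ ^ r * Real.cosh z.re ^ r)
          = Real.cos φ ^ r * (Real.cosh z.re ^ ((1:ℝ)/2) * Real.cosh z.re ^ (1:ℝ) *
            Real.cosh z.re ^ r) by rw [Real.rpow_one]; ring]
      congr 1
      rw [← Real.rpow_add hu, ← Real.rpow_add hu]
      congr 1
      rw [hr]; ring
    calc ‖F z‖ ≤ _ := comb
      _ = Real.cos φ ^ r * Real.cosh z.re ^ (-(n:ℝ)) := alg
      _ ≤ Real.cos φ ^ r * (2 * Real.exp (-(|z.re|/2))) :=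
          mul_le_mul_of_nonneg_left (key_pow z.re) (by positivity)
      _ = (2 * Real.cos φ ^ r) * Real.exp (-(|z.re|/2)) := by ring
  have HbG : ∀ z : ℂ, z.im ∈ Set.uIcc 0 φ →
      ‖G z‖ ≤ (2 * (2 + |φ|) * Real.cos φ ^ r) * Real.exp (-(|z.re|/2)) := by
    intro z hz
    have hu : 0 < Real.cosh z.re := Real.cosh_pos _
    have e0 : ‖z‖ ≤ |z.re| + |φ| := by
      calc ‖z‖ ≤ |z.re| + |z.im| := Complex.norm_le_abs_re_add_abs_im z
        _ ≤ |z.re| + |φ| := by linarith [abs_im_le_of_uIcc hz]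
    have e1 : ‖sinhc z ^ ((3:ℂ)/2)‖ ≤ Real.cosh z.re ^ ((3:ℝ)/2) := by
      rw [show ((3:ℂ)/2) = (((3:ℝ)/2 : ℝ) : ℂ) by norm_num, Complex.norm_cpow_real]
      exact Real.rpow_le_rpow (norm_nonneg _) (norm_sinhc_le z) (by norm_num)
    have comb : ‖G z‖ ≤ (|z.re| + |φ|) * Real.cosh z.re ^ ((3:ℝ)/2) *
        ((Real.cos φ * Real.cosh z.re) ^ r) := by
      rw [hG]
      simp only [norm_mul]
      refine mul_le_mul (mul_le_mul e0 e1 (norm_nonneg _) (by positivity))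
        (habs_cpow z hz) (norm_nonneg _) (by positivity)
    have alg : (|z.re| + |φ|) * Real.cosh z.re ^ ((3:ℝ)/2) * ((Real.cos φ * Real.cosh z.re) ^ r)
        = (|z.re| + |φ|) * Real.cos φ ^ r * Real.cosh z.re ^ (-(n:ℝ)) := by
      rw [Real.mul_rpow hcosφ.le hu.le]
      rw [show (|z.re| + |φ|) * Real.cosh z.re ^ ((3:ℝ)/2) *
          (Real.cos φ ^ r * Real.cosh z.re ^ r)
          = (|z.re| + |φ|) * Real.cos φ ^ r *
            (Real.cosh z.re ^ ((3:ℝ)/2) * Real.cosh z.re ^ r) by ring]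
      congr 1
      rw [← Real.rpow_add hu]
      congr 1
      rw [hr]; ring
    have habs2 : (|z.re| + |φ|) * Real.cosh z.re ^ (-(n:ℝ)) ≤
        2 * (2 + |φ|) * Real.exp (-(|z.re|/2)) := by
      have h1 : (|z.re| + |φ|) ≤ (2 + |φ|) * Real.exp (|z.re|/2) := by
        have he := Real.add_one_le_exp (|z.re|/2)
        have he1 : (1:ℝ) ≤ Real.exp (|z.re|/2) := by
          rw [← Real.exp_zero]
          exact Real.exp_le_exp.mpr (by positivity)
        nlinarith [abs_nonneg z.re, abs_nonneg φ, Real.exp_pos (|z.re|/2)]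
      have h2 : Real.cosh z.re ^ (-(n:ℝ)) ≤ 2 * Real.exp (-|z.re|) := by
        have h1' : Real.cosh z.re ^ (-(n:ℝ)) ≤ Real.cosh z.re ^ (-(1:ℝ)) :=
          Real.rpow_le_rpow_of_exponent_le (Real.one_le_cosh _)
            (by linarith)
        rw [Real.rpow_neg_one] at h1'
        exact h1'.trans (cosh_inv_le _)
      calc (|z.re| + |φ|) * Real.cosh z.re ^ (-(n:ℝ))
          ≤ ((2 + |φ|) * Real.exp (|z.re|/2)) * (2 * Real.exp (-|z.re|)) := by
            apply mul_le_mul h1 h2 (by positivity) (by positivity)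
        _ = 2 * (2 + |φ|) * (Real.exp (|z.re|/2) * Real.exp (-|z.re|)) := by ring
        _ = 2 * (2 + |φ|) * Real.exp (-(|z.re|/2)) := by
            rw [← Real.exp_add]
            congr 1
            ring
    calc ‖G z‖ ≤ _ := comb
      _ = (|z.re| + |φ|) * Real.cos φ ^ r * Real.cosh z.re ^ (-(n:ℝ)) := alg
      _ = Real.cos φ ^ r * ((|z.re| + |φ|) * Real.cosh z.re ^ (-(n:ℝ))) := by ring
      _ ≤ Real.cos φ ^ r * (2 * (2 + |φ|) * Real.exp (-(|z.re|/2))) :=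
          mul_le_mul_of_nonneg_left habs2 (by positivity)
      _ = (2 * (2 + |φ|) * Real.cos φ ^ r) * Real.exp (-(|z.re|/2)) := by ring
  obtain ⟨IF0, IFφ, hFeq⟩ := contour_shift F φ _ HdF HbF
  obtain ⟨IG0, IGφ, hGeq⟩ := contour_shift G φ _ HdG HbG
  -- pointwise identities
  have h2A : ∀ l : ℝ, ((shc l ^ ((1:ℝ)/2) : ℝ) : ℂ) = sinhc (l:ℂ) ^ ((1:ℂ)/2) := by
    intro l
    rw [Complex.ofReal_cpow (shc_pos l).le, ofReal_shc]
    norm_num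
  have h2B : ∀ l : ℝ, ((shc l ^ ((3:ℝ)/2) : ℝ) : ℂ) = sinhc (l:ℂ) ^ ((3:ℂ)/2) := by
    intro l
    rw [Complex.ofReal_cpow (shc_pos l).le, ofReal_shc]
    norm_num
  have pA0 : ∀ l : ℝ, ((shc l ^ ((1:ℝ)/2) * Real.cosh l : ℝ) : ℂ) *
      Complex.cosh ((l:ℂ) - Complex.I * φ) ^ (-(n:ℂ) - 3/2) = F (l:ℂ) := by
    intro l
    rw [hF]
    simp only []
    rw [Complex.ofReal_mul, h2A, Complex.ofReal_cosh]
  have pB0 : ∀ l : ℝ, ((l * shc l ^ ((3:ℝ)/2) : ℝ) : ℂ) *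
      Complex.cosh ((l:ℂ) - Complex.I * φ) ^ (-(n:ℂ) - 3/2) = G (l:ℂ) := by
    intro l
    rw [hG]
    simp only []
    rw [Complex.ofReal_mul, h2B]
  have pAφ : ∀ l : ℝ, F ((l:ℂ) + (φ:ℂ) * Complex.I) =
      sinhc ((l:ℂ) + Complex.I * φ) ^ ((1:ℂ)/2) * Complex.cosh ((l:ℂ) + Complex.I * φ) *
        Complex.cosh (l:ℂ) ^ (-(n:ℂ) - 3/2) := by
    intro l
    rw [hF]
    simp only []
    rw [show ((l:ℂ) + (φ:ℂ) * Complex.I) - Complex.I * (φ:ℂ) = (l:ℂ) by ring,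
      show ((l:ℂ) + (φ:ℂ) * Complex.I) = (l:ℂ) + Complex.I * (φ:ℂ) by ring]
  have pBφ : ∀ l : ℝ, G ((l:ℂ) + (φ:ℂ) * Complex.I) =
      ((l:ℂ) + Complex.I * φ) * sinhc ((l:ℂ) + Complex.I * φ) ^ ((3:ℂ)/2) *
        Complex.cosh (l:ℂ) ^ (-(n:ℂ) - 3/2) := by
    intro l
    rw [hG]
    simp only []
    rw [show ((l:ℂ) + (φ:ℂ) * Complex.I) - Complex.I * (φ:ℂ) = (l:ℂ) by ring,
      show ((l:ℂ) + (φ:ℂ) * Complex.I) = (l:ℂ) + Complex.I * (φ:ℂ) by ring]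
  refine ⟨?_, ?_, ?_, ?_, ?_, ?_⟩
  · exact IF0.congr (Filter.Eventually.of_forall fun l => (pA0 l).symm)
  · exact IG0.congr (Filter.Eventually.of_forall fun l => (pB0 l).symm)
  · exact IFφ.congr (Filter.Eventually.of_forall fun l => pAφ l)
  · exact IGφ.congr (Filter.Eventually.of_forall fun l => pBφ l)
  · calc (∫ l : ℝ, ((shc l ^ ((1:ℝ)/2) * Real.cosh l : ℝ) : ℂ) *
          Complex.cosh ((l:ℂ) - Complex.I * φ) ^ (-(n:ℂ) - 3/2))
        = ∫ l : ℝ, F (l:ℂ) := by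
          congr 1
          funext l
          exact pA0 l
      _ = ∫ l : ℝ, F ((l:ℂ) + (φ:ℂ) * Complex.I) := hFeq
      _ = An n (Complex.I * φ) := by
          rw [An]
          congr 1
          funext l
          exact pAφ l
  · calc (∫ l : ℝ, ((l * shc l ^ ((3:ℝ)/2) : ℝ) : ℂ) *
          Complex.cosh ((l:ℂ) - Complex.I * φ) ^ (-(n:ℂ) - 3/2))
        = ∫ l : ℝ, G (l:ℂ) := by
          congr 1
          funext l
          exact pB0 l
      _ = ∫ l : ℝ, G ((l:ℂ) + (φ:ℂ) * Complex.I) := hGeq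
      _ = Bn n (Complex.I * φ) := by
          rw [Bn]
          congr 1
          funext l
          exact pBφ l
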